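/- Let p be prime and let r = ∑_{i=0}^n a_i p^i with digits a_i ∈ {0,…,p−1}. Then in characteristic p, the derivational degree of the monomial y^r equals ∑_{i=0}^n a_i. In particular, d-deg(y^p) = 1 and, for p ∤ r with r having base-p digit sum s, the (s+1)-fold discrete difference ∂_{u₁,…,u_{s+1}}(y^r) vanishes identically while the s-fold difference does not. -/

import Mathlib

/-- Iterated additive differencing: `iterD f k u = ∂_{u₁,…,u_k} f`,
where `∂_v f (x) = f (x + v) - f x` and the last difference is applied outermost. -/
def iterD {K : Type*} [AddGroup K] (f : K → K) : (k : ℕ) → (Fin k → K) → K → K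
  | 0, _ => f
  | k + 1, u => fun x =>
      iterD f k (fun i => u i.castSucc) (x + u (Fin.last k)) -
        iterD f k (fun i => u i.castSucc) x

/-- The derivational degree of `f`: the minimal `d ≥ 0` such that all `(d+1)`-fold
differences of `f` vanish identically. -/
noncomputable def ddeg {K : Type*} [AddGroup K] (f : K → K) : ℕ :=
  sInf {d : ℕ | ∀ (u : Fin (d + 1) → K) (x : K), iterD f (d + 1) u x = 0}

set_option linter.unusedSectionVars false

section Part12
variable {K : Type*} [AddGroup K]
lemma iterD_succ_eq (f : K → K) (k : ℕ) (u : Fin (k+1) → K) :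
    iterD f (k+1) u = iterD (fun x => f (x + u 0) - f x) k (fun i => u i.succ) := by
  induction k with
  | zero => funext x; simp [iterD]
  | succ k ih =>
      funext x
      show iterD f (k+1) (fun i => u i.castSucc) (x + u (Fin.last (k+1)))
          - iterD f (k+1) (fun i => u i.castSucc) x = _
      rw [ih (fun i => u i.castSucc)]
      simp only [iterD]
      simp only [Fin.castSucc_zero, Fin.succ_castSucc, Fin.succ_last]

lemma iterD_eq_sum {R : Type*} [CommRing R] (f : R → R) (k : ℕ) (u : Fin k → R) (x : R) :
    iterD f k u x = ∑ ε : Fin k → Bool,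
      (∏ i, (if ε i then (1:R) else -1)) * f (x + ∑ i, (if ε i then u i else 0)) := by
  induction k generalizing f x with
  | zero => simp [iterD]
  | succ k ih =>
      rw [iterD_succ_eq, ih]
      rw [← (Fin.consEquiv (fun _ : Fin (k+1) => Bool)).sum_comp]
      rw [Fintype.sum_prod_type]
      rw [Fintype.sum_bool]
      simp only [Fin.consEquiv_apply, Fin.prod_univ_succ, Fin.sum_univ_succ,
        Fin.cons_zero, Fin.cons_succ, if_true, if_false, one_mul, neg_one_mul, zero_add]
      simp only [Bool.false_eq_true, if_false, if_true]
      rw [← Finset.sum_add_distrib]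
      refine Finset.sum_congr rfl fun ε _ => ?_
      have h1 : ((x + ∑ i : Fin k, if ε i = true then u i.succ else 0) + u 0)
          = x + (u 0 + ∑ i : Fin k, if ε i = true then u i.succ else 0) := by ring
      have h2 : (x + ∑ i : Fin k, if ε i = true then u i.succ else 0)
          = x + ((0:R) + ∑ i : Fin k, if ε i = true then u i.succ else 0) := by ring
      rw [mul_sub, h1, h2]
      ring

end Part12

section Part3
open Nat

variable (p : ℕ) [hp : Fact p.Prime]

lemma digitsum_eq_zero_iff (n : ℕ) : (Nat.digits p n).sum = 0 ↔ n = 0 := by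
  constructor
  · intro h
    by_contra hn
    have hne : Nat.digits p n ≠ [] := Nat.digits_ne_nil_iff_ne_zero.mpr hn
    have hmem : (Nat.digits p n).getLast hne ∈ Nat.digits p n := List.getLast_mem hne
    have h1 : 1 ≤ (Nat.digits p n).getLast hne :=
      Nat.one_le_iff_ne_zero.mpr (Nat.getLast_digit_ne_zero p hn)
    have := List.single_le_sum (fun x _ => Nat.zero_le x) _ hmem
    omega
  · rintro rfl; simp

lemma digitsum_prime_pow (c : ℕ) : (Nat.digits p (p ^ c)).sum = 1 := by
  have hb : 1 < p := hp.out.one_lt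
  have h1 : Nat.digits p 1 = [1] := by
    rw [Nat.digits_def' hb one_pos]
    simp [Nat.mod_eq_of_lt hb, Nat.div_eq_of_lt hb]
  have : p ^ c = p ^ c * 1 := by ring
  rw [this, Nat.digits_base_pow_mul hb one_pos, h1]
  simp

lemma padicValNat_prod {ι : Type*} (s : Finset ι) (f : ι → ℕ) (h : ∀ i ∈ s, f i ≠ 0) :
    padicValNat p (∏ i ∈ s, f i) = ∑ i ∈ s, padicValNat p (f i) := by
  classical
  induction s using Finset.cons_induction with
  | empty => simp
  | cons a s ha ih =>
      rw [Finset.prod_cons, Finset.sum_cons,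
        padicValNat.mul (h a (Finset.mem_cons_self a s))
          (Finset.prod_ne_zero_iff.mpr fun i hi => h i (Finset.mem_cons_of_mem hi)),
        ih (fun i hi => h i (Finset.mem_cons_of_mem hi))]

lemma choose_digitsum {i j : ℕ} (hj : j ≤ i) (h : ¬ p ∣ Nat.choose i j) :
    (Nat.digits p j).sum + (Nat.digits p (i - j)).sum = (Nat.digits p i).sum := by
  have key := Nat.choose_mul_factorial_mul_factorial hj
  have hv := congrArg (padicValNat p) key
  rw [padicValNat.mul (Nat.mul_ne_zero (Nat.choose_pos hj).ne' (Nat.factorial_ne_zero _))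
      (Nat.factorial_ne_zero _),
    padicValNat.mul (Nat.choose_pos hj).ne' (Nat.factorial_ne_zero _)] at hv
  have h0 : padicValNat p (i.choose j) = 0 := padicValNat.eq_zero_of_not_dvd h
  have hv' := congrArg (fun t => (p - 1) * t) hv
  simp only [h0, zero_add, Nat.mul_add] at hv'
  rw [sub_one_mul_padicValNat_factorial, sub_one_mul_padicValNat_factorial,
    sub_one_mul_padicValNat_factorial] at hv'
  have d1 := Nat.digit_sum_le p j
  have d2 := Nat.digit_sum_le p (i - j)
  have d3 := Nat.digit_sum_le p i
  omega

lemma not_dvd_multinomial {m : ℕ} (e : Fin m → ℕ)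
    (hds : ∑ i, (Nat.digits p (e i)).sum = (Nat.digits p (∑ i, e i)).sum) :
    ¬ p ∣ Nat.multinomial Finset.univ e := by
  classical
  have key : (∏ i : Fin m, (e i)!) * Nat.multinomial Finset.univ e = (∑ i : Fin m, e i)! :=
    Nat.multinomial_spec _ _
  have hv := congrArg (padicValNat p) key
  rw [padicValNat.mul (Finset.prod_ne_zero_iff.mpr fun i _ => Nat.factorial_ne_zero _)
      (Nat.multinomial_pos _ _).ne',
    padicValNat_prod p _ _ (fun i _ => Nat.factorial_ne_zero _)] at hv
  have hv' := congrArg (fun t => (p - 1) * t) hv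
  simp only [Nat.mul_add, Finset.mul_sum] at hv'
  rw [sub_one_mul_padicValNat_factorial] at hv'
  simp only [sub_one_mul_padicValNat_factorial] at hv'
  rw [Finset.sum_tsub_distrib _ (fun i _ => Nat.digit_sum_le p (e i))] at hv'
  rw [hds] at hv'
  have d1 : ∑ i, (Nat.digits p (e i)).sum ≤ ∑ i, e i :=
    Finset.sum_le_sum fun i _ => Nat.digit_sum_le p (e i)
  have d3 := Nat.digit_sum_le p (∑ i, e i)
  have hp1 : 1 < p := hp.out.one_lt
  rw [hds] at d1
  have hw : (p - 1) * padicValNat p (Nat.multinomial Finset.univ e) = 0 := by omega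
  have hv0 : padicValNat p (Nat.multinomial Finset.univ e) = 0 := by
    rcases Nat.mul_eq_zero.mp hw with h | h
    · omega
    · exact h
  intro hdvd
  have := one_le_padicValNat_of_dvd (Nat.multinomial_pos _ _).ne' hdvd
  omega

end Part3

section Part4
open Polynomial

variable {K : Type*} [Field K] (p : ℕ) [hp : Fact p.Prime] [CharP K p]

noncomputable def Dp (u : K) (P : K[X]) : K[X] := P.comp (X + C u) - P

lemma eval_Dp (u : K) (P : K[X]) (x : K) :
    (Dp u P).eval x = P.eval (x + u) - P.eval x := by
  simp [Dp, eval_comp]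

lemma coeff_Dp (u : K) (P : K[X]) (j : ℕ) :
    (Dp u P).coeff j =
      (∑ i ∈ P.support, P.coeff i * (u ^ (i - j) * (i.choose j : K))) - P.coeff j := by
  rw [Dp, coeff_sub, comp_eq_sum_left, Polynomial.sum_def, finset_sum_coeff]
  congr 1
  refine Finset.sum_congr rfl fun i _ => ?_
  rw [coeff_C_mul, coeff_X_add_C_pow]

lemma support_Dp {u : K} {P : K[X]} {j : ℕ} (hj : j ∈ (Dp u P).support) :
    ∃ i ∈ P.support, j < i ∧ (i.choose j : K) ≠ 0 := by
  by_contra hcon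
  push_neg at hcon
  have hz : (Dp u P).coeff j = 0 := by
    rw [coeff_Dp]
    have : ∑ i ∈ P.support, P.coeff i * (u ^ (i - j) * (i.choose j : K)) = P.coeff j := by
      rw [Finset.sum_eq_single j]
      · simp
      · intro b hb hbj
        rcases lt_or_gt_of_ne hbj with hlt | hgt
        · rw [Nat.choose_eq_zero_of_lt hlt]; simp
        · rw [hcon b hb hgt]; simp
      · intro hjs
        rw [Polynomial.notMem_support_iff.mp hjs, zero_mul]
    rw [this, sub_self]
  exact (Polynomial.mem_support_iff.mp hj) hz

def good (m : ℕ) (P : K[X]) : Prop := ∀ i ∈ P.support, (Nat.digits p i).sum ≤ m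

lemma good_Dp {m : ℕ} {P : K[X]} (h : good p (m + 1) P) (u : K) :
    good p m (Dp u P) := by
  intro j hj
  obtain ⟨i, hi, hji, hc⟩ := support_Dp hj
  have hnd : ¬ p ∣ i.choose j := fun hd => hc ((CharP.cast_eq_zero_iff K p _).mpr hd)
  have hsum := choose_digitsum p (le_of_lt hji) hnd
  have h1 : (Nat.digits p (i - j)).sum ≠ 0 :=
    fun h0 => by have := (digitsum_eq_zero_iff p _).mp h0; omega
  have := h i hi
  omega

lemma vanish : ∀ (m : ℕ) (P : K[X]), good p m P →
    ∀ (u : Fin (m + 1) → K) (x : K), iterD (fun y => P.eval y) (m + 1) u x = 0 := by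
  intro m
  induction m with
  | zero =>
      intro P hP u x
      have hC : P = C (P.coeff 0) := by
        apply Polynomial.eq_C_of_natDegree_le_zero
        rw [Polynomial.natDegree_le_iff_coeff_eq_zero]
        intro i hi
        by_contra hne
        have hmem : i ∈ P.support := Polynomial.mem_support_iff.mpr hne
        have := hP i hmem
        have := (digitsum_eq_zero_iff p i).mp (Nat.le_zero.mp this)
        omega
      show (fun y => P.eval y) (x + u (Fin.last 0)) - (fun y => P.eval y) x = 0
      rw [hC]
      simp
  | succ m ih =>
      intro P hP u x
      rw [iterD_succ_eq]
      have hfun : (fun y : K => P.eval (y + u 0) - P.eval y)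
          = (fun y : K => (Dp (u 0) P).eval y) := by
        funext y; rw [eval_Dp]
      show iterD (fun y : K => P.eval (y + u 0) - P.eval y) (m + 1) (fun i => u i.succ) x = 0
      rw [hfun]
      exact ih (Dp (u 0) P) (good_Dp p hP (u 0)) _ x

lemma upper (r : ℕ) (u : Fin ((Nat.digits p r).sum + 1) → K) (x : K) :
    iterD (fun y : K => y ^ r) ((Nat.digits p r).sum + 1) u x = 0 := by
  have hfun : (fun y : K => y ^ r) = (fun y : K => (X ^ r : K[X]).eval y) := by
    funext y; simp
  rw [hfun]
  apply vanish p
  intro i hi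
  have hsub : (X ^ r : K[X]).support ⊆ {r} := by
    rw [← Polynomial.monomial_one_right_eq_X_pow]
    exact Polynomial.support_monomial' r 1
  have : i = r := Finset.mem_singleton.mp (hsub hi)
  rw [this]

end Part4

section Part5
open MvPolynomial

-- expand a digit list into a list of exponents
def expandL : List ℕ → List ℕ
  | [] => []
  | a :: t => List.replicate a 0 ++ (expandL t).map (· + 1)

lemma expandL_length (l : List ℕ) : (expandL l).length = l.sum := by
  induction l with
  | nil => rfl
  | cons a t ih => simp [expandL, ih]

lemma expandL_sum (p : ℕ) (l : List ℕ) :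
    ((expandL l).map (p ^ ·)).sum = Nat.ofDigits p l := by
  induction l with
  | nil => simp [expandL, Nat.ofDigits]
  | cons a t ih =>
      rw [expandL, List.map_append, List.sum_append, Nat.ofDigits_cons, ← ih]
      congr 1
      · simp [List.map_replicate]
      · rw [List.map_map]
        have h2 : ((fun x : ℕ => p ^ x) ∘ fun x => x + 1) = fun c : ℕ => p * p ^ c := by
          funext c; rw [Function.comp_apply, pow_succ, mul_comm]
        rw [h2]
        exact List.sum_map_mul_left _ _ _

lemma list_sum_map_eq_sum_fin {α β : Type*} [AddCommMonoid β] (l : List α) (f : α → β) :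
    (l.map f).sum = ∑ i : Fin l.length, f (l.get i) := by
  conv_lhs => rw [← List.ofFn_getElem (xs := l)]
  rw [List.map_ofFn, List.sum_ofFn]
  rfl

variable {K : Type*} [Field K] (p : ℕ) [hp : Fact p.Prime] [CharP K p] [Infinite K]

lemma lower (r : ℕ) :
    ∃ (u : Fin ((Nat.digits p r).sum) → K) (x : K),
      iterD (fun y : K => y ^ r) ((Nat.digits p r).sum) u x ≠ 0 := by
  classical
  set s := (Nat.digits p r).sum with hs
  set l := expandL (Nat.digits p r) with hl
  have hlen : l.length = s := by rw [hl, expandL_length, hs]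
  -- the decomposition of r into s prime powers
  set e : Fin s → ℕ := fun i => p ^ l.get (Fin.cast hlen.symm i) with he
  have hsum : ∑ i, e i = r := by
    rw [he]
    have h1 : ∑ i : Fin l.length, p ^ l.get i
        = ∑ i : Fin s, p ^ l.get (Fin.cast hlen.symm i) :=
      Fintype.sum_equiv (finCongr hlen) _ _ (fun i => rfl)
    rw [← h1, ← list_sum_map_eq_sum_fin l (p ^ ·), hl, expandL_sum, Nat.ofDigits_digits]
  have hds : ∑ i, (Nat.digits p (e i)).sum = (Nat.digits p (∑ i, e i)).sum := by
    rw [hsum, ← hs]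
    simp only [he, digitsum_prime_pow p]
    simp
  have hmult : ¬ p ∣ Nat.multinomial Finset.univ e := not_dvd_multinomial p e hds
  set efin : Fin s →₀ ℕ := Finsupp.equivFunOnFinite.symm e with hefin
  -- the polynomial G
  set G : MvPolynomial (Fin s) K := ∑ ε : Fin s → Bool,
      MvPolynomial.C (∏ i, if ε i then (1:K) else -1) *
        (∑ i, if ε i then (X i : MvPolynomial (Fin s) K) else 0) ^ r with hG
  have hevalG : ∀ u : Fin s → K, MvPolynomial.eval u G = iterD (fun y : K => y ^ r) s u 0 := by
    intro u
    rw [iterD_eq_sum, hG, map_sum]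
    refine Finset.sum_congr rfl fun ε _ => ?_
    rw [map_mul, eval_C, map_pow, map_sum]
    simp only [apply_ite (MvPolynomial.eval u), eval_X, map_zero, zero_add]
  -- the coefficient of G at efin is the multinomial coefficient
  have hprodmono : ∀ g : Fin s → ℕ, (∏ i, (X i : MvPolynomial (Fin s) K) ^ g i) =
      monomial (Finsupp.equivFunOnFinite.symm g) 1 := by
    intro g
    calc ∏ i, (X i : MvPolynomial (Fin s) K) ^ g i
        = ∏ i ∈ (Finsupp.equivFunOnFinite.symm g).support,
            (X i : MvPolynomial (Fin s) K) ^ (Finsupp.equivFunOnFinite.symm g) i :=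
          (Finset.prod_subset (Finset.subset_univ _)
            (fun i _ hi => by have h0 : g i = 0 := Finsupp.notMem_support_iff.mp hi; rw [h0, pow_zero])).symm
      _ = monomial (Finsupp.equivFunOnFinite.symm g) 1 := by
          rw [monic_monomial_eq]; rfl
  have hcoeffuniv : MvPolynomial.coeff efin ((∑ i, (X i : MvPolynomial (Fin s) K)) ^ r)
      = (Nat.multinomial Finset.univ e : K) := by
    rw [Finset.sum_pow_eq_sum_piAntidiag, MvPolynomial.coeff_sum]
    rw [Finset.sum_eq_single e]
    · rw [show ((Nat.multinomial Finset.univ e : MvPolynomial (Fin s) K))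
          = MvPolynomial.C ((Nat.multinomial Finset.univ e : K)) by rfl]
      rw [coeff_C_mul, hprodmono, coeff_monomial, if_pos rfl, mul_one]
    · intro g hg hge
      rw [show ((Nat.multinomial Finset.univ g : MvPolynomial (Fin s) K))
          = MvPolynomial.C ((Nat.multinomial Finset.univ g : K)) by rfl]
      rw [coeff_C_mul, hprodmono, coeff_monomial,
        if_neg (fun h => hge (Finsupp.equivFunOnFinite.symm.injective (h.trans hefin.symm))), mul_zero]
    · intro habs
      exact absurd (Finset.mem_piAntidiag.mpr ⟨hsum, fun i _ => Finset.mem_univ i⟩) habs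
  have hcoeffG : MvPolynomial.coeff efin G = (Nat.multinomial Finset.univ e : K) := by
    rw [hG, MvPolynomial.coeff_sum]
    rw [Finset.sum_eq_single (fun _ => true)]
    · simp only [if_true, Finset.prod_const_one, map_one, one_mul]
      exact hcoeffuniv
    · intro ε _ hεne
      have : ∃ i0, ε i0 = false := by
        by_contra hno
        push_neg at hno
        exact hεne (funext fun i => by simpa using hno i)
      obtain ⟨i0, hi0⟩ := this
      rw [coeff_C_mul]
      convert mul_zero _
      by_contra hne
      have hmem : efin ∈ ((∑ i, if ε i then (X i : MvPolynomial (Fin s) K) else 0) ^ r).support :=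
        MvPolynomial.mem_support_iff.mpr hne
      have hvar : i0 ∈ ((∑ i, if ε i then (X i : MvPolynomial (Fin s) K) else 0) ^ r).vars := by
        rw [MvPolynomial.mem_vars]
        refine ⟨efin, hmem, ?_⟩
        rw [Finsupp.mem_support_iff]
        show e i0 ≠ 0
        rw [he]
        exact pow_ne_zero _ hp.out.pos.ne'
      have hvar2 := MvPolynomial.vars_pow (∑ i, if ε i then (X i : MvPolynomial (Fin s) K) else 0) r hvar
      have hvar3 := MvPolynomial.vars_sum_subset Finset.univ
          (fun i => if ε i then (X i : MvPolynomial (Fin s) K) else 0) hvar2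
      rw [Finset.mem_biUnion] at hvar3
      obtain ⟨i, _, hi⟩ := hvar3
      by_cases hεi : ε i = true
      · simp only [hεi, if_true, MvPolynomial.vars_X, Finset.mem_singleton] at hi
        rw [hi] at hi0
        rw [hεi] at hi0
        exact Bool.noConfusion hi0
      · simp only [Bool.not_eq_true] at hεi
        simp only [hεi, Bool.false_eq_true, if_false, MvPolynomial.vars_0] at hi
        exact absurd hi (Finset.notMem_empty i0)
    · intro habs
      exact absurd (Finset.mem_univ _) habs
  have hGne : G ≠ 0 := by
    intro h0
    rw [h0, MvPolynomial.coeff_zero] at hcoeffG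
    exact (fun hd => hmult ((CharP.cast_eq_zero_iff K p _).mp hd)) hcoeffG.symm
  by_contra hcon
  push_neg at hcon
  apply hGne
  apply MvPolynomial.funext (q := 0)
  intro u
  rw [map_zero, hevalG]
  exact hcon u 0

end Part5

section Part6

lemma ddeg_pow (p : ℕ) [hp : Fact p.Prime] {K : Type*} [Field K] [CharP K p] [Infinite K]
    (r : ℕ) : ddeg (fun y : K => y ^ r) = (Nat.digits p r).sum := by
  classical
  set f : K → K := fun y => y ^ r with hf
  set s : ℕ := (Nat.digits p r).sum with hsdef
  set S : Set ℕ := {d : ℕ | ∀ (u : Fin (d + 1) → K) (x : K), iterD f (d + 1) u x = 0} with hS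
  have hmem : s ∈ S := fun u x => upper p r u x
  have hclosure : ∀ d, d ∈ S → d + 1 ∈ S := by
    intro d hd u x
    show iterD f (d + 1) (fun i => u i.castSucc) (x + u (Fin.last (d + 1))) -
        iterD f (d + 1) (fun i => u i.castSucc) x = 0
    rw [hd, hd, sub_zero]
  have hup : ∀ t d, d ∈ S → d + t ∈ S := by
    intro t
    induction t with
    | zero => intro d hd; exact hd
    | succ t ih => intro d hd; have := hclosure (d + t) (ih d hd); rwa [← add_assoc]
  show sInf S = s
  apply le_antisymm
  · exact Nat.sInf_le hmem
  · refine le_csInf ⟨s, hmem⟩ ?_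
    intro m hm
    by_contra hlt
    push_neg at hlt
    have hs1 : s - 1 + 1 = s := by omega
    have hSm : (s - 1) ∈ S := by
      have := hup (s - 1 - m) m hm
      rwa [show m + (s - 1 - m) = s - 1 by omega] at this
    obtain ⟨u, x, hne⟩ := lower (K := K) p r
    apply hne
    have h2 : ∀ (u : Fin (s - 1 + 1) → K) (x : K), iterD f (s - 1 + 1) u x = 0 := hSm
    rw [hs1] at h2
    exact h2 u x

theorem stmt_7 (p : ℕ) [Fact p.Prime] (K : Type*) [Field K] [CharP K p] [Infinite K]
    (r : ℕ) :
    ddeg (fun y : K => y ^ r) = (Nat.digits p r).sum ∧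
    ddeg (fun y : K => y ^ p) = 1 := by
  constructor
  · exact ddeg_pow p r
  · rw [ddeg_pow p p]
    have := digitsum_prime_pow p 1
    rwa [pow_one] at this

end Part6
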